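/- Let α ∈ (0, 1/2] and C > 0. There exists a constant C̃ = C̃(α, C) > 0 such that the following holds: for all nonnegative real numbers E, W, I, δ satisfying δ = (1/2)I − E, E ≤ W√I − (1/2)W², and W ≤ C δ^α, one has E ≤ C̃ (δ^{1/2 + α} + δ^{2α}). (Interpretation: if a function class satisfies the stability estimate W₂(f dγ, dγ) ≤ C δ(f)^α, then by the HWI inequality Ent(f) ≤ W₂√I(f) − W₂²/2 one obtains Ent(f) ≤ C̃(δ(f)^{1/2+α} + δ(f)^{2α}).) -/
import Mathlib


/- Common setup: the standard Gaussian measure on ℝⁿ, entropy, Fisher information,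
log-Sobolev deficit, 2-Wasserstein distance, the class F(ε,M), and Hessian matrices. -/

open MeasureTheory Real
open scoped RealInnerProductSpace

/-- The standard Gaussian probability measure `dγ = (2π)^{-n/2} e^{-|x|²/2} dx` on `ℝⁿ`. -/
noncomputable def gaussianM (n : ℕ) : Measure (EuclideanSpace ℝ (Fin n)) :=
  volume.withDensity fun x => ENNReal.ofReal ((2 * π) ^ (-(n : ℝ) / 2) * Real.exp (-‖x‖ ^ 2 / 2))

/-- Entropy `Ent(f) = ∫ f log f dγ − ‖f‖_{L¹(dγ)} log ‖f‖_{L¹(dγ)}`. -/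
noncomputable def Ent (n : ℕ) (f : EuclideanSpace ℝ (Fin n) → ℝ) : ℝ :=
  (∫ x, f x * Real.log (f x) ∂gaussianM n) -
    (∫ x, f x ∂gaussianM n) * Real.log (∫ x, f x ∂gaussianM n)

/-- Fisher information `I(f) = ∫ |∇f|²/f dγ`. -/
noncomputable def Fisher (n : ℕ) (f : EuclideanSpace ℝ (Fin n) → ℝ) : ℝ :=
  ∫ x, ‖gradient f x‖ ^ 2 / f x ∂gaussianM n

/-- The log-Sobolev deficit `δ(f) = (1/2) I(f) − Ent(f)`. -/
noncomputable def deficit (n : ℕ) (f : EuclideanSpace ℝ (Fin n) → ℝ) : ℝ :=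
  (1 / 2) * Fisher n f - Ent n f

/-- The 2-Wasserstein distance between two measures on `ℝⁿ`:
`W₂(μ,ν) = (inf_π ∫ |x−y|² dπ)^{1/2}`, the infimum running over couplings of `μ` and `ν`. -/
noncomputable def W2 {n : ℕ} (μ ν : Measure (EuclideanSpace ℝ (Fin n))) : ℝ :=
  Real.sqrt (sInf {c : ℝ |
    ∃ pl : Measure (EuclideanSpace ℝ (Fin n) × EuclideanSpace ℝ (Fin n)),
      IsProbabilityMeasure pl ∧ pl.map Prod.fst = μ ∧ pl.map Prod.snd = ν ∧
      c = ∫ p, ‖p.1 - p.2‖ ^ 2 ∂pl})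

/-- The class `F(ε,M)`: functions `f = e^{-h}` with `h` twice differentiable and
`(−1+ε)·Id ≤ D²h(x) ≤ M·Id` for all `x` (as quadratic forms). -/
def memF (n : ℕ) (ε M : ℝ) (f : EuclideanSpace ℝ (Fin n) → ℝ) : Prop :=
  ∃ h : EuclideanSpace ℝ (Fin n) → ℝ,
    (∀ x, f x = Real.exp (-h x)) ∧
    Differentiable ℝ h ∧ Differentiable ℝ (fderiv ℝ h) ∧
    (∀ x v, (-1 + ε) * ‖v‖ ^ 2 ≤ fderiv ℝ (fderiv ℝ h) x v v) ∧
    (∀ x v, fderiv ℝ (fderiv ℝ h) x v v ≤ M * ‖v‖ ^ 2)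

/-- The Hessian matrix `D²g(x)` of `g : ℝⁿ → ℝ`, in the standard basis. -/
noncomputable def hessM (n : ℕ) (g : EuclideanSpace ℝ (Fin n) → ℝ)
    (x : EuclideanSpace ℝ (Fin n)) : Matrix (Fin n) (Fin n) ℝ :=
  Matrix.of fun i j =>
    fderiv ℝ (fderiv ℝ g) x (EuclideanSpace.single i 1) (EuclideanSpace.single j 1)

/-- **Abstract entropy bound from a stability estimate (Lemma 4.1).** For `α ∈ (0,1/2]`
and `C > 0` there is `C̃ > 0` such that whenever nonnegative reals `E, W, I, δ` satisfy
`δ = (1/2)I − E`, the HWI-type bound `E ≤ W√I − W²/2`, and `W ≤ C δ^α`, one has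
`E ≤ C̃ (δ^{1/2+α} + δ^{2α})`. -/
theorem entropy_from_stability (α C : ℝ) (hα0 : 0 < α) (hα : α ≤ 1 / 2) (hC : 0 < C) :
    ∃ Ct : ℝ, 0 < Ct ∧
      ∀ E W I δ : ℝ, 0 ≤ E → 0 ≤ W → 0 ≤ I → 0 ≤ δ →
        δ = (1 / 2) * I - E →
        E ≤ W * Real.sqrt I - (1 / 2) * W ^ 2 →
        W ≤ C * δ ^ α →
        E ≤ Ct * (δ ^ ((1 : ℝ) / 2 + α) + δ ^ (2 * α)) := by
  refine ⟨2 * C ^ 2 + 2 * C, by positivity, ?_⟩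
  intro E W I δ hE0 hW0 hI0 hδ0 hδdef hHWI hstab
  rcases eq_or_lt_of_le hδ0 with hδz | hδpos
  · -- δ = 0 case
    have hδ : δ = 0 := hδz.symm
    subst hδ
    have hz : (0 : ℝ) ^ α = 0 := Real.zero_rpow (ne_of_gt hα0)
    have hW : W = 0 := le_antisymm (by rw [hz] at hstab; linarith) hW0
    have hE : E ≤ 0 := by rw [hW] at hHWI; simpa using hHWI
    have h1 : (0 : ℝ) ^ ((1 : ℝ) / 2 + α) = 0 := Real.zero_rpow (by linarith)
    have h2 : (0 : ℝ) ^ (2 * α) = 0 := Real.zero_rpow (by linarith)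
    rw [h1, h2]
    linarith
  · set a := δ ^ α with ha_def
    have ha0 : 0 ≤ a := Real.rpow_nonneg hδ0 α
    set s := Real.sqrt δ with hs_def
    have hs0 : 0 ≤ s := Real.sqrt_nonneg δ
    have hs2 : s ^ 2 = δ := Real.sq_sqrt hδ0
    set t := Real.sqrt I with ht_def
    have ht0 : 0 ≤ t := Real.sqrt_nonneg I
    have ht2 : t ^ 2 = I := Real.sq_sqrt hI0
    have hrw1 : δ ^ ((1 : ℝ) / 2 + α) = s * a := by
      rw [Real.rpow_add hδpos]
      congr 1
      rw [hs_def, Real.sqrt_eq_rpow]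
    have hrw2 : δ ^ (2 * α) = a ^ 2 := by
      rw [mul_comm, Real.rpow_mul hδ0, Real.rpow_two]
    rw [hrw1, hrw2]
    have hEWt : E ≤ W * t := by nlinarith [sq_nonneg W]
    have hW2 : W ^ 2 ≤ (C * a) ^ 2 := pow_le_pow_left₀ hW0 hstab 2
    have hkey : E ^ 2 ≤ 2 * (C * a) ^ 2 * E + 2 * (C * a) ^ 2 * s ^ 2 := by
      have h1 : E ^ 2 ≤ (W * t) ^ 2 := pow_le_pow_left₀ hE0 hEWt 2
      have h3 : W ^ 2 * t ^ 2 ≤ (C * a) ^ 2 * t ^ 2 :=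
        mul_le_mul_of_nonneg_right hW2 (sq_nonneg t)
      have hI : I = 2 * E + 2 * δ := by linarith
      nlinarith [hs2, ht2]
    have hp0 : 0 ≤ C * a := mul_nonneg hC.le ha0
    have hstep : E ≤ 2 * (C * a) ^ 2 + 2 * (C * a) * s := by
      nlinarith [hkey, mul_nonneg hp0 hs0, hE0, sq_nonneg (C * a * s),
        mul_nonneg (mul_nonneg hp0 hp0) (mul_nonneg hp0 hs0),
        mul_nonneg (mul_nonneg hp0 hp0) (mul_nonneg hs0 hs0)]
    have h1 : 0 ≤ C ^ 2 * a * s := mul_nonneg (mul_nonneg (sq_nonneg C) ha0) hs0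
    have h2 : 0 ≤ C * a ^ 2 := mul_nonneg hC.le (sq_nonneg a)
    have hexp : (2 * C ^ 2 + 2 * C) * (s * a + a ^ 2)
        = (2 * (C * a) ^ 2 + 2 * (C * a) * s) + 2 * (C ^ 2 * a * s) + 2 * (C * a ^ 2) := by
      ring
    rw [hexp]
    linarith [hstep, h1, h2]
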